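/- Let G be a finite simple graph and v ∈ V(G). If the set 𝒩(v) of T₃-neighborhoods of v (maximal subsets M ⊆ V(G)\{v} such that every pair of distinct vertices in M forms a connected triple with v) has exactly one element N_v, then either N_v = N(v), or N_v = N(v) ∪ {w} for a unique vertex w ∉ N(v) ∪ {v} that is adjacent to every vertex of N(v). -/

import Mathlib

/-- Every pair of distinct vertices of `M` forms a connected triple with `v`
(at least two of the three pairs are edges). -/
def PairwiseT3 {V : Type*} (G : SimpleGraph V) (v : V) (M : Set V) : Prop :=
  ∀ a ∈ M, ∀ b ∈ M, a ≠ b →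
    ((G.Adj v a ∧ G.Adj v b) ∨ (G.Adj v a ∧ G.Adj a b) ∨ (G.Adj v b ∧ G.Adj a b))

/-- A `T₃`-neighborhood of `v`: a maximal subset of `V \ {v}` every pair of
whose distinct vertices forms a connected triple with `v`. -/
def IsT3Neighborhood {V : Type*} (G : SimpleGraph V) (v : V) (M : Set V) : Prop :=
  v ∉ M ∧ PairwiseT3 G v M ∧
    ∀ M' : Set V, v ∉ M' → PairwiseT3 G v M' → M ⊆ M' → M' = M

/-- If `v` has exactly one `T₃`-neighborhood `N_v`, then either `N_v = N(v)` or
`N_v = N(v) ∪ {w}` for a unique vertex `w ∉ N[v]` adjacent to all of `N(v)`. -/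
theorem stmt18 {V : Type*} [Fintype V] (G : SimpleGraph V) (hc : G.Connected)
    (h3 : 3 ≤ Fintype.card V) (v : V) (hdeg : 2 ≤ (G.neighborSet v).ncard)
    (Nv : Set V) (hNv : IsT3Neighborhood G v Nv)
    (huniq : ∀ M : Set V, IsT3Neighborhood G v M → M = Nv) :
    Nv = G.neighborSet v ∨
      ∃! w : V, w ∉ G.neighborSet v ∧ w ≠ v ∧
        Nv = G.neighborSet v ∪ {w} ∧ ∀ x ∈ G.neighborSet v, G.Adj w x := by
  classical
  -- N(v) ⊆ Nv
  have hNsub : G.neighborSet v ⊆ Nv := by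
    set P : Set V → Prop := fun S => v ∉ S ∧ PairwiseT3 G v S ∧ G.neighborSet v ⊆ S with hP
    have hfin : {S | P S}.Finite := Set.toFinite _
    have hne : {S | P S}.Nonempty := by
      refine ⟨G.neighborSet v, ?_, ?_, subset_rfl⟩
      · simp [SimpleGraph.mem_neighborSet]
      · intro a ha b hb hab; exact Or.inl ⟨ha, hb⟩
    obtain ⟨S, hS, hmax⟩ := Set.Finite.exists_maximalFor Set.ncard _ hfin hne
    have hT3 : IsT3Neighborhood G v S := by
      refine ⟨hS.1, hS.2.1, ?_⟩
      intro M' hv' hp' hsub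
      have hM'P : P M' := ⟨hv', hp', hS.2.2.trans hsub⟩
      have h1 : S.ncard ≤ M'.ncard := Set.ncard_le_ncard hsub (Set.toFinite _)
      have h2 := hmax (j := M') hM'P h1
      exact (Set.eq_of_subset_of_ncard_le hsub h2.ge (Set.toFinite _)).symm
    have hSNv := huniq S hT3
    exact hSNv ▸ hS.2.2
  have honly : ∀ w ∈ Nv, w ∉ G.neighborSet v → ∀ w' ∈ Nv, w' ∉ G.neighborSet v → w = w' := by
    intro w hw hwn w' hw' hw'n
    by_contra hne
    rcases hNv.2.1 w hw w' hw' hne with ⟨h, _⟩ | ⟨h, _⟩ | ⟨h, _⟩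
    · exact hwn h
    · exact hwn h
    · exact hw'n h
  by_cases hcase : Nv ⊆ G.neighborSet v
  · exact Or.inl (Set.Subset.antisymm hcase hNsub)
  · right
    obtain ⟨w, hwNv, hwn⟩ := Set.not_subset.mp hcase
    have hwv : w ≠ v := by rintro rfl; exact hNv.1 hwNv
    have heq : Nv = G.neighborSet v ∪ {w} := by
      apply Set.Subset.antisymm
      · intro y hy
        by_cases hyn : y ∈ G.neighborSet v
        · exact Or.inl hyn
        · exact Or.inr (honly y hy hyn w hwNv hwn)
      · rintro y (hy | rfl)
        · exact hNsub hy
        · exact hwNv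
    have hadj : ∀ x ∈ G.neighborSet v, G.Adj w x := by
      intro x hx
      have hxNv : x ∈ Nv := hNsub hx
      have hxw : w ≠ x := by rintro rfl; exact hwn hx
      rcases hNv.2.1 w hwNv x hxNv hxw with ⟨h, _⟩ | ⟨h, _⟩ | ⟨_, h⟩
      · exact absurd h hwn
      · exact absurd h hwn
      · exact h
    refine ⟨w, ⟨hwn, hwv, heq, hadj⟩, ?_⟩
    rintro w' ⟨hw'n, hw'v, heq', hadj'⟩
    have : w ∈ G.neighborSet v ∪ {w'} := heq' ▸ hwNv
    rcases this with h | h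
    · exact absurd h hwn
    · exact h.symm
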